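/- Let τ_α = −ln(1−α) for α ∈ (0,1), and let ξ_α be the largest solution of y^{(d+2)α} e^{-y^{2α}/4} = C_α sin(απ) with ξ_α ≥ [2(d+2)]^{1/(2α)}, where C_α > 0 is bounded away from 0 and ∞ as α → 1. Then ξ_α^{2α}/4 ∼ −ln(1−α) as α → 1⁻, i.e. the ratio (ξ_α^{2α}/4)/(−ln(1−α)) tends to 1. -/

import Mathlib

open MeasureTheory Real Set Filter

set_option maxHeartbeats 1000000 in
theorem stmt_18 (d : ℕ) (hd : 1 ≤ d) (C ξ : ℝ → ℝ)
    (hC : ∃ c₁ c₂ : ℝ, 0 < c₁ ∧ ∀ α ∈ Set.Ioo (1/2 : ℝ) 1, c₁ ≤ C α ∧ C α ≤ c₂)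
    (hξ : ∀ α ∈ Set.Ioo (1/2 : ℝ) 1,
      (2 * ((d : ℝ) + 2)) ^ (1 / (2 * α)) ≤ ξ α ∧
      (ξ α) ^ (((d : ℝ) + 2) * α) * Real.exp (-(ξ α) ^ (2 * α) / 4)
        = C α * Real.sin (α * Real.pi) ∧
      ∀ y : ℝ, (2 * ((d : ℝ) + 2)) ^ (1 / (2 * α)) ≤ y →
        y ^ (((d : ℝ) + 2) * α) * Real.exp (-y ^ (2 * α) / 4)
          = C α * Real.sin (α * Real.pi) → y ≤ ξ α) :
    Filter.Tendsto (fun α => ((ξ α) ^ (2 * α) / 4) / (-Real.log (1 - α)))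
      (nhdsWithin 1 (Set.Iio 1)) (nhds 1) := by
  obtain ⟨c₁, c₂, hc₁, hCb⟩ := hC
  set l : Filter ℝ := nhdsWithin 1 (Set.Iio 1) with hl
  set k : ℝ := ((d : ℝ) + 2) / 2 with hk
  have hk1 : (3/2 : ℝ) ≤ k := by
    have : (1:ℝ) ≤ (d:ℝ) := by exact_mod_cast hd
    rw [hk]; linarith
  have hkpos : (0:ℝ) < k := by linarith
  set u : ℝ → ℝ := fun α => ξ α ^ (2 * α) / 4 with hu
  set L : ℝ → ℝ := fun α => -Real.log (1 - α) with hLdef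
  set L' : ℝ → ℝ := fun α => -(Real.log (C α) + Real.log (Real.sin (α * Real.pi)))
    with hL'
  have hmem : ∀ᶠ α in l, α ∈ Set.Ioo (1/2 : ℝ) 1 :=
    Ioo_mem_nhdsLT_of_mem (by norm_num)
  -- the key pointwise identity
  have heq : ∀ᶠ α in l, k ≤ u α ∧ u α = k * Real.log (4 * u α) + L' α := by
    filter_upwards [hmem] with α hα
    obtain ⟨h1, h2, _⟩ := hξ α hα
    have hα0 : (0:ℝ) < α := by linarith [hα.1]
    have h2α : (0:ℝ) < 2 * α := by linarith
    have ha : (0:ℝ) < 2 * ((d : ℝ) + 2) := by positivity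
    have hξpos : 0 < ξ α := lt_of_lt_of_le (Real.rpow_pos_of_pos ha _) h1
    have hvge : 2 * ((d : ℝ) + 2) ≤ ξ α ^ (2 * α) := by
      have h := Real.rpow_le_rpow (Real.rpow_nonneg ha.le _) h1 h2α.le
      rwa [← Real.rpow_mul ha.le, one_div, inv_mul_cancel₀ h2α.ne', Real.rpow_one] at h
    have hvpos : 0 < ξ α ^ (2 * α) := lt_of_lt_of_le ha hvge
    have huk : k ≤ u α := by
      simp only [hu, hk]
      have : 2 * ((d : ℝ) + 2) ≤ ξ α ^ (2 * α) := hvge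
      linarith
    refine ⟨huk, ?_⟩
    -- rewrite the power
    have hpow : ξ α ^ (((d : ℝ) + 2) * α) = (ξ α ^ (2 * α)) ^ k := by
      rw [← Real.rpow_mul hξpos.le]
      congr 1
      rw [hk]; ring
    have hsin : 0 < Real.sin (α * Real.pi) := by
      apply Real.sin_pos_of_pos_of_lt_pi
      · positivity
      · nlinarith [Real.pi_pos, hα.2]
    have hCpos : 0 < C α := lt_of_lt_of_le hc₁ (hCb α hα).1
    -- take logs of the equation
    have h2' : (ξ α ^ (2 * α)) ^ k * Real.exp (-(ξ α ^ (2 * α)) / 4)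
        = C α * Real.sin (α * Real.pi) := by rw [← hpow]; exact h2
    have hlog := congrArg Real.log h2'
    rw [Real.log_mul (by positivity) (Real.exp_ne_zero _), Real.log_exp,
      Real.log_rpow hvpos, Real.log_mul hCpos.ne' hsin.ne'] at hlog
    have h4u : 4 * u α = ξ α ^ (2 * α) := by simp only [hu]; ring
    show u α = k * Real.log (4 * u α) + -(Real.log (C α) + Real.log (Real.sin (α * Real.pi)))
    rw [h4u]
    simp only [hu]
    linarith [hlog]
  -- L tends to infinity
  have hLtop : Tendsto L l atTop := by
    have h1 : Tendsto (fun α : ℝ => 1 - α) l (nhdsWithin 0 (Set.Ioi 0)) := by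
      apply tendsto_nhdsWithin_of_tendsto_nhds_of_eventually_within
      · have hcont : Continuous (fun α : ℝ => 1 - α) := by continuity
        have : Tendsto (fun α : ℝ => 1 - α) (nhds 1) (nhds 0) := by
          simpa using hcont.tendsto 1
        exact this.mono_left nhdsWithin_le_nhds
      · filter_upwards [self_mem_nhdsWithin] with α (hα : α < 1)
        simpa using hα
    have h2 := Real.tendsto_log_nhdsGT_zero.comp h1
    have h3 := tendsto_neg_atBot_atTop.comp h2
    exact h3
  have hLpos : ∀ᶠ α in l, 0 < L α := hLtop.eventually_gt_atTop 0
  -- log C / L tends to 0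
  have hinv : Tendsto (fun α => (L α)⁻¹) l (nhds 0) := hLtop.inv_tendsto_atTop
  have hC0 : Tendsto (fun α => -Real.log (C α) / L α) l (nhds 0) := by
    apply squeeze_zero_norm' (a := fun α => (|Real.log c₁| + |Real.log c₂|) * |(L α)⁻¹|)
    · filter_upwards [hmem] with α hα
      obtain ⟨hc, hc'⟩ := hCb α hα
      have hCpos : 0 < C α := lt_of_lt_of_le hc₁ hc
      have h1 : Real.log (C α) ≤ Real.log c₂ := Real.log_le_log hCpos hc'
      have h2 : Real.log c₁ ≤ Real.log (C α) := Real.log_le_log hc₁ hc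
      have : |Real.log (C α)| ≤ |Real.log c₁| + |Real.log c₂| := by
        rw [abs_le]
        constructor
        · linarith [abs_nonneg (Real.log c₂), neg_abs_le (Real.log c₁)]
        · linarith [abs_nonneg (Real.log c₁), le_abs_self (Real.log c₂)]
      calc ‖-Real.log (C α) / L α‖ = |Real.log (C α)| * |(L α)⁻¹| := by
            rw [Real.norm_eq_abs, div_eq_mul_inv, abs_mul, abs_neg]
        _ ≤ (|Real.log c₁| + |Real.log c₂|) * |(L α)⁻¹| := by
            apply mul_le_mul_of_nonneg_right this (abs_nonneg _)
    · have : Tendsto (fun α => |(L α)⁻¹|) l (nhds 0) := by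
        simpa using hinv.abs
      simpa using this.const_mul (|Real.log c₁| + |Real.log c₂|)
  -- -log sin(απ) / L tends to 1
  have hsin1 : Tendsto (fun α => -Real.log (Real.sin (α * Real.pi)) / L α) l (nhds 1) := by
    have key : ∀ᶠ α in l, -Real.log (Real.sin (α * Real.pi)) / L α
        = 1 - Real.log (Real.sin ((1 - α) * Real.pi) / (1 - α)) / L α ∧
        |Real.log (Real.sin ((1 - α) * Real.pi) / (1 - α))| ≤ |Real.log Real.pi| + |Real.log 2| := by
      filter_upwards [hmem, hLpos] with α hα hLα
      have hε : 0 < 1 - α := by linarith [hα.2]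
      have hε2 : 1 - α ≤ 1/2 := by linarith [hα.1]
      have hsineq : Real.sin (α * Real.pi) = Real.sin ((1 - α) * Real.pi) := by
        rw [← Real.sin_pi_sub]; congr 1; ring
      have hsinpos : 0 < Real.sin ((1 - α) * Real.pi) := by
        apply Real.sin_pos_of_pos_of_lt_pi
        · positivity
        · nlinarith [Real.pi_pos]
      have hratio_ub : Real.sin ((1 - α) * Real.pi) / (1 - α) ≤ Real.pi := by
        rw [div_le_iff₀ hε]
        have := Real.sin_le (by positivity : 0 ≤ (1 - α) * Real.pi)
        linarith
      have hratio_lb : 2 ≤ Real.sin ((1 - α) * Real.pi) / (1 - α) := by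
        rw [le_div_iff₀ hε]
        have h := Real.mul_le_sin (x := (1 - α) * Real.pi) (by positivity)
          (by nlinarith [Real.pi_pos])
        have hπ : 2 / Real.pi * ((1 - α) * Real.pi) = 2 * (1 - α) := by
          field_simp
        rw [hπ] at h; linarith
      constructor
      · rw [hsineq]
        have : Real.log (Real.sin ((1 - α) * Real.pi))
            = Real.log (1 - α) + Real.log (Real.sin ((1 - α) * Real.pi) / (1 - α)) := by
          rw [← Real.log_mul hε.ne' (by positivity)]
          congr 1
          field_simp
        rw [this]
        have hLne : L α ≠ 0 := hLα.ne'
        have hsplit : -(Real.log (1 - α)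
            + Real.log (Real.sin ((1 - α) * Real.pi) / (1 - α)))
            = L α - Real.log (Real.sin ((1 - α) * Real.pi) / (1 - α)) := by
          simp only [hLdef]; ring
        rw [hsplit, sub_div, div_self hLne]
      · have h1 : Real.log (Real.sin ((1 - α) * Real.pi) / (1 - α)) ≤ Real.log Real.pi :=
          Real.log_le_log (by positivity) hratio_ub
        have h2 : Real.log 2 ≤ Real.log (Real.sin ((1 - α) * Real.pi) / (1 - α)) :=
          Real.log_le_log (by norm_num) hratio_lb
        have hl2 : (0:ℝ) ≤ Real.log 2 := Real.log_nonneg (by norm_num)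
        rw [abs_le]
        constructor
        · linarith [abs_nonneg (Real.log Real.pi), abs_nonneg (Real.log 2)]
        · linarith [le_abs_self (Real.log Real.pi), abs_nonneg (Real.log 2)]
    have hg0 : Tendsto (fun α => Real.log (Real.sin ((1 - α) * Real.pi) / (1 - α)) / L α)
        l (nhds 0) := by
      apply squeeze_zero_norm' (a := fun α => (|Real.log Real.pi| + |Real.log 2|) * |(L α)⁻¹|)
      · filter_upwards [key] with α ⟨_, hb⟩
        calc ‖Real.log (Real.sin ((1 - α) * Real.pi) / (1 - α)) / L α‖
            = |Real.log (Real.sin ((1 - α) * Real.pi) / (1 - α))| * |(L α)⁻¹| := by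
              rw [Real.norm_eq_abs, div_eq_mul_inv, abs_mul]
          _ ≤ (|Real.log Real.pi| + |Real.log 2|) * |(L α)⁻¹| :=
              mul_le_mul_of_nonneg_right hb (abs_nonneg _)
      · have : Tendsto (fun α => |(L α)⁻¹|) l (nhds 0) := by simpa using hinv.abs
        simpa using this.const_mul (|Real.log Real.pi| + |Real.log 2|)
    have := (tendsto_const_nhds (x := (1:ℝ)) (f := l)).sub hg0
    rw [sub_zero] at this
    apply this.congr'
    filter_upwards [key] with α ⟨he, _⟩
    exact he.symm
  -- L' / L tends to 1
  have hL'div : Tendsto (fun α => L' α / L α) l (nhds 1) := by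
    have : Tendsto (fun α => -Real.log (C α) / L α
        + -Real.log (Real.sin (α * Real.pi)) / L α) l (nhds (0 + 1)) := hC0.add hsin1
    rw [zero_add] at this
    apply this.congr
    intro α
    rw [hL']
    ring
  -- L' tends to infinity
  have hL'top : Tendsto L' l atTop := by
    have h := hL'div.pos_mul_atTop one_pos hLtop
    apply h.congr'
    filter_upwards [hLpos] with α hLα
    field_simp
  -- eventually u ≤ 2 L'
  have huL' : ∀ᶠ α in l, u α ≤ 2 * L' α := by
    filter_upwards [heq, hL'top.eventually_ge_atTop (64 * k ^ 2)] with α ⟨huk, he⟩ hL'big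
    have hupos : 0 < u α := lt_of_lt_of_le hkpos huk
    have hlogle : Real.log (4 * u α) ≤ 4 * Real.sqrt (u α) := by
      have h1 : Real.log (4 * u α) = 2 * Real.log (Real.sqrt (4 * u α)) := by
        rw [Real.log_sqrt (by positivity)]; ring
      have h2 : Real.log (Real.sqrt (4 * u α)) ≤ Real.sqrt (4 * u α) - 1 :=
        Real.log_le_sub_one_of_pos (Real.sqrt_pos.mpr (by positivity))
      have h3 : Real.sqrt (4 * u α) = 2 * Real.sqrt (u α) := by
        rw [show (4 : ℝ) * u α = 2^2 * u α by norm_num, Real.sqrt_mul (by norm_num),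
          Real.sqrt_sq (by norm_num)]
      nlinarith [Real.sqrt_nonneg (u α)]
    by_cases hcase : u α ≤ 64 * k ^ 2
    · linarith
    · push_neg at hcase
      have hsq : 8 * k < Real.sqrt (u α) := by
        have : Real.sqrt (64 * k ^ 2) < Real.sqrt (u α) :=
          Real.sqrt_lt_sqrt (by positivity) hcase
        rwa [show (64 : ℝ) * k ^ 2 = (8 * k)^2 by ring, Real.sqrt_sq (by positivity)] at this
      have hmul : Real.sqrt (u α) * Real.sqrt (u α) = u α := Real.mul_self_sqrt hupos.le
      have h5 : 4 * k * Real.sqrt (u α) ≤ (Real.sqrt (u α) / 2) * Real.sqrt (u α) :=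
        mul_le_mul_of_nonneg_right (by linarith) (Real.sqrt_nonneg _)
      have h6 : (Real.sqrt (u α) / 2) * Real.sqrt (u α) = u α / 2 := by
        rw [div_mul_eq_mul_div, hmul]
      have h7 : k * Real.log (4 * u α) ≤ 4 * k * Real.sqrt (u α) := by
        calc k * Real.log (4 * u α) ≤ k * (4 * Real.sqrt (u α)) :=
              mul_le_mul_of_nonneg_left hlogle hkpos.le
          _ = 4 * k * Real.sqrt (u α) := by ring
      linarith
  -- eventually u ≤ 3 L
  have huL : ∀ᶠ α in l, u α ≤ 3 * L α := by
    filter_upwards [huL', hLpos, (tendsto_order.1 hL'div).2 (3/2) (by norm_num)] with α h1 h2 h3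
    have h4 : L' α ≤ (3/2) * L α := by
      rw [div_lt_iff₀ h2] at h3
      exact le_of_lt h3
    calc u α ≤ 2 * L' α := h1
      _ ≤ 2 * ((3/2) * L α) := mul_le_mul_of_nonneg_left h4 (by norm_num)
      _ = 3 * L α := by ring
  -- log(4u)/L tends to 0
  have hlog0 : Tendsto (fun α => Real.log (4 * u α) / L α) l (nhds 0) := by
    have hbase : Tendsto (fun t : ℝ => Real.log (12 * t) / t) atTop (nhds 0) := by
      have h1 : Tendsto (fun t : ℝ => Real.log t / t) atTop (nhds 0) :=
        Real.isLittleO_log_id_atTop.tendsto_div_nhds_zero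
      have h2 : Tendsto (fun t : ℝ => 12 * t) atTop atTop :=
        Filter.Tendsto.const_mul_atTop (by norm_num) tendsto_id
      have h3 := (h1.comp h2).const_mul (12 : ℝ)
      rw [mul_zero] at h3
      apply h3.congr'
      filter_upwards [eventually_gt_atTop (0:ℝ)] with t ht
      simp only [Function.comp]
      field_simp
    have h4 := hbase.comp hLtop
    apply squeeze_zero_norm' (a := fun α => Real.log (12 * L α) / L α)
    · filter_upwards [heq, huL, hLpos] with α ⟨huk, _⟩ h3L hLα
      have h4u : (1:ℝ) ≤ 4 * u α := by nlinarith
      have hlognn : 0 ≤ Real.log (4 * u α) := Real.log_nonneg h4u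
      rw [Real.norm_eq_abs, abs_of_nonneg (by positivity)]
      rw [div_le_div_iff_of_pos_right hLα]
      apply Real.log_le_log (by positivity)
      calc 4 * u α ≤ 4 * (3 * L α) := mul_le_mul_of_nonneg_left h3L (by norm_num)
        _ = 12 * L α := by ring
    · exact h4
  -- combine everything
  have hfin : Tendsto (fun α => k * (Real.log (4 * u α) / L α) + L' α / L α)
      l (nhds (k * 0 + 1)) := (hlog0.const_mul k).add hL'div
  rw [mul_zero, zero_add] at hfin
  apply hfin.congr'
  filter_upwards [heq] with α ⟨_, he⟩
  show k * (Real.log (4 * u α) / L α) + L' α / L α = u α / L α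
  rw [← mul_div_assoc, ← add_div, ← he]
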